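/- For every natural number p and every natural number n there exist constants C > 0 and δ > 0 such that for all real λ with 0 < λ < δ one has |∫_{−∞}^{∞} φ^{2p} exp(−φ²/2 − (λ/24)φ⁴) dφ − 2^{p+1/2} Σ_{k=0}^{n−1} ((−1)^k/k!)·Γ(1/2 + p + 2k)·(λ/6)^k| ≤ C·λ^n. That is, the stated series is an asymptotic expansion of the 2p-th moment integral as λ → 0⁺. -/

import Mathlib

open MeasureTheory
open Set


lemma integrable_pow_mul_gauss (m : ℕ) :
    Integrable (fun x : ℝ => x ^ m * Real.exp (-x ^ 2 / 2)) := by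
  have h := integrable_rpow_mul_exp_neg_mul_sq (b := 1/2) (by norm_num)
      (s := (m : ℝ)) (lt_of_lt_of_le neg_one_lt_zero (Nat.cast_nonneg m))
  simp_rw [Real.rpow_natCast] at h
  exact h.congr (Filter.Eventually.of_forall fun x => by ring_nf)

lemma gauss_moment (m : ℕ) :
    ∫ x : ℝ, x ^ (2 * m) * Real.exp (-x ^ 2 / 2)
      = 2 ^ ((m : ℝ) + 1 / 2) * Real.Gamma ((m : ℝ) + 1 / 2) := by
  have hint := integrable_pow_mul_gauss (2 * m)
  have hIoi : (∫ x in Ioi (0:ℝ), x ^ (2 * m) * Real.exp (-x ^ 2 / 2))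
      = 2 ^ ((m : ℝ) + 1 / 2) * (1 / 2) * Real.Gamma ((m : ℝ) + 1 / 2) := by
    have h := integral_rpow_mul_exp_neg_mul_rpow (p := 2) (q := (2 * m : ℝ))
        (by norm_num) (lt_of_lt_of_le neg_one_lt_zero (by positivity)) (b := 1/2) (by norm_num)
    rw [show ((2:ℝ) * m + 1) / 2 = (m : ℝ) + 1/2 by ring] at h
    rw [show -((2:ℝ) * m + 1) / 2 = -((m : ℝ) + 1/2) by ring] at h
    rw [show ((1:ℝ)/2) ^ (-((m : ℝ) + 1/2)) = 2 ^ ((m : ℝ) + 1/2) by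
      rw [one_div, Real.inv_rpow (by norm_num), ← Real.rpow_neg (by norm_num), neg_neg]] at h
    rw [← h]
    refine setIntegral_congr_fun measurableSet_Ioi fun x hx => ?_
    rw [show ((2:ℝ) * m) = ((2 * m : ℕ) : ℝ) by push_cast; ring, Real.rpow_natCast,
      show ((2:ℝ)) = ((2 : ℕ) : ℝ) by norm_num, Real.rpow_natCast]
    ring_nf
  have h0 := integral_comp_neg_Ioi (0:ℝ) (fun x => x ^ (2 * m) * Real.exp (-x ^ 2 / 2))
  rw [neg_zero] at h0
  have hIic : (∫ x in Iic (0:ℝ), x ^ (2 * m) * Real.exp (-x ^ 2 / 2))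
      = ∫ x in Ioi (0:ℝ), x ^ (2 * m) * Real.exp (-x ^ 2 / 2) := by
    rw [← h0]
    refine setIntegral_congr_fun measurableSet_Ioi fun x hx => ?_
    rw [Even.neg_pow (even_two_mul m), neg_sq]
  have hsplit := integral_add_compl (measurableSet_Ioi (a := (0:ℝ))) hint
  rw [compl_Ioi, hIic, hIoi] at hsplit
  rw [← hsplit]; ring


lemma exp_neg_taylor_bound (n : ℕ) : ∀ x : ℝ, 0 ≤ x →
    |Real.exp (-x) - ∑ k ∈ Finset.range n, (-x) ^ k / (Nat.factorial k : ℝ)|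
      ≤ x ^ n / (Nat.factorial n : ℝ) := by
  induction n with
  | zero =>
    intro x hx
    simp only [Finset.range_zero, Finset.sum_empty, sub_zero, pow_zero, Nat.factorial_zero,
      Nat.cast_one, div_one]
    rw [abs_of_nonneg (Real.exp_pos _).le]
    exact Real.exp_le_one_iff.mpr (by linarith)
  | succ n ih =>
    intro x hx
    have hderiv : ∀ t : ℝ, HasDerivAt
        (fun t : ℝ => Real.exp (-t) - ∑ k ∈ Finset.range (n+1), (-t) ^ k / (Nat.factorial k : ℝ))
        (-(Real.exp (-t) - ∑ k ∈ Finset.range n, (-t) ^ k / (Nat.factorial k : ℝ))) t := by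
      intro t
      have h1 : HasDerivAt (fun t : ℝ => Real.exp (-t)) (Real.exp (-t) * (-1)) t :=
        (Real.hasDerivAt_exp (-t)).comp t (hasDerivAt_neg' t)
      have h2 : ∀ k : ℕ, HasDerivAt (fun t : ℝ => (-t) ^ k / (Nat.factorial k : ℝ))
          ((k : ℝ) * (-t) ^ (k - 1) * (-1) / (Nat.factorial k : ℝ)) t := by
        intro k
        exact (((hasDerivAt_pow k (-t)).comp t (hasDerivAt_neg' t))).div_const _
      have h3 := HasDerivAt.fun_sum (fun k (_ : k ∈ Finset.range (n+1)) => h2 k)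
      have h4 := h1.fun_sub h3
      refine h4.congr_deriv ?_
      rw [Finset.sum_range_succ']
      have hz : ((0:ℕ) : ℝ) * (-t) ^ (0 - 1) * (-1) / (Nat.factorial 0 : ℝ) = 0 := by simp
      rw [hz, add_zero]
      have hterm : ∀ k ∈ Finset.range n,
          ((k+1 : ℕ) : ℝ) * (-t) ^ (k+1-1) * (-1) / (Nat.factorial (k+1) : ℝ)
            = -((-t) ^ k / (Nat.factorial k : ℝ)) := by
        intro k _
        have hfac : (Nat.factorial (k+1) : ℝ) = (k+1) * Nat.factorial k := by
          push_cast [Nat.factorial_succ]; ring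
        have hne : (Nat.factorial k : ℝ) ≠ 0 := Nat.cast_ne_zero.mpr (Nat.factorial_ne_zero k)
        rw [hfac, Nat.add_sub_cancel]
        field_simp
        push_cast
        ring
      rw [Finset.sum_congr rfl hterm, Finset.sum_neg_distrib]
      ring
    have hR0 : Real.exp (-(0:ℝ)) - ∑ k ∈ Finset.range (n+1), (-(0:ℝ)) ^ k / (Nat.factorial k : ℝ)
        = 0 := by
      rw [Finset.sum_eq_single_of_mem 0 (Finset.mem_range.mpr (Nat.succ_pos n))
        (fun k _ hk => by simp [zero_pow hk])]
      simp
    have hcont : Continuous fun t : ℝ =>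
        -(Real.exp (-t) - ∑ k ∈ Finset.range n, (-t) ^ k / (Nat.factorial k : ℝ)) := by
      refine Continuous.neg (Continuous.sub (Real.continuous_exp.comp continuous_neg) ?_)
      exact continuous_finset_sum _ fun k _ => ((continuous_pow k).comp continuous_neg).div_const _
    have hftc := intervalIntegral.integral_eq_sub_of_hasDerivAt
      (f := fun t : ℝ => Real.exp (-t) - ∑ k ∈ Finset.range (n+1), (-t) ^ k / (Nat.factorial k : ℝ))
      (a := 0) (b := x) (fun t _ => hderiv t) (hcont.intervalIntegrable 0 x)
    simp only [hR0, sub_zero] at hftc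
    rw [← hftc]
    have hbound : ‖∫ t in (0:ℝ)..x,
        -(Real.exp (-t) - ∑ k ∈ Finset.range n, (-t) ^ k / (Nat.factorial k : ℝ))‖
        ≤ |∫ t in (0:ℝ)..x, t ^ n / (Nat.factorial n : ℝ)| := by
      refine intervalIntegral.norm_integral_le_abs_of_norm_le ?_
        (((continuous_pow n).div_const _).intervalIntegrable 0 x)
      have hsub : Set.uIoc (0:ℝ) x ⊆ {t : ℝ | 0 ≤ t} := by
        rw [uIoc_of_le hx]
        exact fun t ht => le_of_lt ht.1
      filter_upwards [ae_restrict_mem measurableSet_uIoc] with t ht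
      rw [norm_neg, Real.norm_eq_abs]
      exact ih t (hsub ht)
    have hval : (∫ t in (0:ℝ)..x, t ^ n / (Nat.factorial n : ℝ))
        = x ^ (n+1) / (Nat.factorial (n+1) : ℝ) := by
      rw [intervalIntegral.integral_div, integral_pow]
      rw [show (Nat.factorial (n+1) : ℝ) = (n+1) * Nat.factorial n by
        push_cast [Nat.factorial_succ]; ring]
      field_simp
      simp
    rw [hval] at hbound
    rw [Real.norm_eq_abs] at hbound
    refine hbound.trans ?_
    rw [abs_of_nonneg (by positivity)]

noncomputable section

/-- The perturbative series is an asymptotic expansion of the 2p-th moment integral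
as `λ → 0⁺`. -/
theorem moment_integral_asymptotic_expansion :
    ∀ p n : ℕ, ∃ C > (0 : ℝ), ∃ δ > (0 : ℝ), ∀ lam : ℝ, 0 < lam → lam < δ →
      |(∫ φ : ℝ, φ ^ (2 * p) * Real.exp (-φ ^ 2 / 2 - (lam / 24) * φ ^ 4)) -
        (2 : ℝ) ^ ((p : ℝ) + 1 / 2) * ∑ k ∈ Finset.range n,
          ((-1) ^ k / (Nat.factorial k : ℝ)) * Real.Gamma (1 / 2 + p + 2 * k) *
            (lam / 6) ^ k| ≤ C * lam ^ n := by
  intro p n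
  set G : ℕ → ℝ := fun m => ∫ x : ℝ, x ^ (2 * m) * Real.exp (-x ^ 2 / 2) with hG
  have hGval : ∀ m : ℕ, G m = 2 ^ ((m : ℝ) + 1 / 2) * Real.Gamma ((m : ℝ) + 1 / 2) :=
    fun m => gauss_moment m
  have hGpos : 0 < G (p + 2 * n) := by
    rw [hGval]
    have h1 : 0 < Real.Gamma (((p + 2 * n : ℕ) : ℝ) + 1 / 2) :=
      Real.Gamma_pos_of_pos (by positivity)
    have h2 : (0:ℝ) < 2 ^ (((p + 2 * n : ℕ) : ℝ) + 1 / 2) := Real.rpow_pos_of_pos two_pos _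
    exact mul_pos h2 h1
  have hfac_pos : (0:ℝ) < (Nat.factorial n : ℝ) := by
    exact_mod_cast Nat.factorial_pos n
  refine ⟨G (p + 2 * n) / (24 ^ n * Nat.factorial n),
    div_pos hGpos (by positivity), 1, one_pos, fun lam hlam _ => ?_⟩
  have hint_g := integrable_pow_mul_gauss
  have hx4 : ∀ x : ℝ, 0 ≤ lam / 24 * x ^ 4 := fun x =>
    mul_nonneg (by linarith) (by positivity)
  have hle_exp : ∀ x : ℝ, Real.exp (-x ^ 2 / 2 - lam / 24 * x ^ 4) ≤ Real.exp (-x ^ 2 / 2) :=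
    fun x => Real.exp_le_exp.mpr (by linarith [hx4 x])
  have hpow_nonneg : ∀ (m : ℕ) (x : ℝ), (0:ℝ) ≤ x ^ (2 * m) :=
    fun m x => (even_two_mul m).pow_nonneg x
  have hint_full : Integrable (fun x : ℝ => x ^ (2 * p) *
      Real.exp (-x ^ 2 / 2 - lam / 24 * x ^ 4)) := by
    refine (hint_g (2 * p)).mono' ?_ (Filter.Eventually.of_forall fun x => ?_)
    · exact (((continuous_pow (2*p)).mul (((continuous_pow 2).neg.div_const 2).sub
        (continuous_const.mul (continuous_pow 4))).rexp)).aestronglyMeasurable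
    · rw [Real.norm_eq_abs, abs_mul, abs_of_nonneg (hpow_nonneg p x),
        abs_of_nonneg (Real.exp_pos _).le]
      exact mul_le_mul_of_nonneg_left (hle_exp x) (hpow_nonneg p x)
  have hterm_eq : ∀ (k : ℕ) (x : ℝ), x ^ (2 * p) * Real.exp (-x ^ 2 / 2) *
      ((-(lam / 24 * x ^ 4)) ^ k / (Nat.factorial k : ℝ))
      = ((-(lam / 24)) ^ k / (Nat.factorial k : ℝ)) *
        (x ^ (2 * (p + 2 * k)) * Real.exp (-x ^ 2 / 2)) := by
    intro k x
    rw [show -(lam / 24 * x ^ 4) = (-(lam / 24)) * x ^ 4 by ring, mul_pow, ← pow_mul,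
      show 2 * (p + 2 * k) = 2 * p + 4 * k by ring, pow_add]
    ring
  have hint_term : ∀ k : ℕ, Integrable (fun x : ℝ => x ^ (2 * p) * Real.exp (-x ^ 2 / 2) *
      ((-(lam / 24 * x ^ 4)) ^ k / (Nat.factorial k : ℝ))) := fun k =>
    ((hint_g (2 * (p + 2 * k))).const_mul _).congr
      (Filter.Eventually.of_forall fun x => (hterm_eq k x).symm)
  have hint_sum : Integrable (fun x : ℝ => ∑ k ∈ Finset.range n,
      x ^ (2 * p) * Real.exp (-x ^ 2 / 2) *
        ((-(lam / 24 * x ^ 4)) ^ k / (Nat.factorial k : ℝ))) :=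
    integrable_finset_sum _ fun k _ => hint_term k
  have hmul : ∀ x : ℝ, x ^ (2 * p) * Real.exp (-x ^ 2 / 2) * Real.exp (-(lam / 24 * x ^ 4))
      = x ^ (2 * p) * Real.exp (-x ^ 2 / 2 - lam / 24 * x ^ 4) := by
    intro x
    rw [mul_assoc, ← Real.exp_add]
    ring_nf
  have hsplit : (∫ x : ℝ, x ^ (2 * p) * Real.exp (-x ^ 2 / 2 - lam / 24 * x ^ 4))
      = (∫ x : ℝ, x ^ (2 * p) * Real.exp (-x ^ 2 / 2) *
          (Real.exp (-(lam / 24 * x ^ 4)) - ∑ k ∈ Finset.range n,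
            (-(lam / 24 * x ^ 4)) ^ k / (Nat.factorial k : ℝ)))
        + ∑ k ∈ Finset.range n, ((-(lam / 24)) ^ k / (Nat.factorial k : ℝ)) * G (p + 2 * k) := by
    have h1 : (fun x : ℝ => x ^ (2 * p) * Real.exp (-x ^ 2 / 2) *
          (Real.exp (-(lam / 24 * x ^ 4)) - ∑ k ∈ Finset.range n,
            (-(lam / 24 * x ^ 4)) ^ k / (Nat.factorial k : ℝ)))
        = fun x : ℝ => (x ^ (2 * p) * Real.exp (-x ^ 2 / 2 - lam / 24 * x ^ 4))
          - ∑ k ∈ Finset.range n, x ^ (2 * p) * Real.exp (-x ^ 2 / 2) *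
              ((-(lam / 24 * x ^ 4)) ^ k / (Nat.factorial k : ℝ)) := by
      funext x
      rw [mul_sub, hmul x, Finset.mul_sum]
    rw [h1, integral_sub hint_full hint_sum, integral_finset_sum _ fun k _ => hint_term k]
    have h2 : ∀ k ∈ Finset.range n, (∫ x : ℝ, x ^ (2 * p) * Real.exp (-x ^ 2 / 2) *
        ((-(lam / 24 * x ^ 4)) ^ k / (Nat.factorial k : ℝ)))
        = ((-(lam / 24)) ^ k / (Nat.factorial k : ℝ)) * G (p + 2 * k) := by
      intro k _
      simp_rw [hterm_eq k]
      rw [integral_const_mul]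
    rw [Finset.sum_congr rfl h2]
    ring
  have hseries : (2 : ℝ) ^ ((p : ℝ) + 1 / 2) * ∑ k ∈ Finset.range n,
        ((-1) ^ k / (Nat.factorial k : ℝ)) * Real.Gamma (1 / 2 + p + 2 * k) * (lam / 6) ^ k
      = ∑ k ∈ Finset.range n, ((-(lam / 24)) ^ k / (Nat.factorial k : ℝ)) * G (p + 2 * k) := by
    rw [Finset.mul_sum]
    refine Finset.sum_congr rfl fun k _ => ?_
    rw [hGval (p + 2 * k)]
    rw [show ((p + 2 * k : ℕ) : ℝ) = (p : ℝ) + 2 * k by push_cast; ring]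
    have e1 : (2:ℝ) ^ ((p : ℝ) + 2 * k + 1 / 2) = 2 ^ ((p : ℝ) + 1 / 2) * 4 ^ k := by
      rw [show (p : ℝ) + 2 * k + 1 / 2 = ((p : ℝ) + 1 / 2) + ((2 * k : ℕ) : ℝ) by
        push_cast; ring]
      rw [Real.rpow_add two_pos, Real.rpow_natCast, pow_mul]
      norm_num
    rw [e1, show (1 : ℝ) / 2 + p + 2 * k = (p : ℝ) + 2 * k + 1 / 2 by ring]
    rw [show (-(lam / 24)) ^ k = (-1) ^ k * (lam / 24) ^ k by rw [← neg_one_mul, mul_pow]]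
    rw [show ((lam / 6)) ^ k = (lam / 24) ^ k * 4 ^ k by
      rw [← mul_pow]; congr 1; ring]
    ring
  rw [hsplit, hseries, add_sub_cancel_right]
  have hmaj : ∀ x : ℝ, ‖x ^ (2 * p) * Real.exp (-x ^ 2 / 2) *
      (Real.exp (-(lam / 24 * x ^ 4)) - ∑ k ∈ Finset.range n,
        (-(lam / 24 * x ^ 4)) ^ k / (Nat.factorial k : ℝ))‖
      ≤ ((lam / 24) ^ n / (Nat.factorial n : ℝ)) *
        (x ^ (2 * (p + 2 * n)) * Real.exp (-x ^ 2 / 2)) := by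
    intro x
    rw [Real.norm_eq_abs, abs_mul, abs_mul, abs_of_nonneg (hpow_nonneg p x),
      abs_of_nonneg (Real.exp_pos _).le]
    have h := exp_neg_taylor_bound n (lam / 24 * x ^ 4) (hx4 x)
    calc x ^ (2 * p) * Real.exp (-x ^ 2 / 2) * |Real.exp (-(lam / 24 * x ^ 4)) -
          ∑ k ∈ Finset.range n, (-(lam / 24 * x ^ 4)) ^ k / (Nat.factorial k : ℝ)|
        ≤ x ^ (2 * p) * Real.exp (-x ^ 2 / 2) *
            ((lam / 24 * x ^ 4) ^ n / (Nat.factorial n : ℝ)) := by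
          exact mul_le_mul_of_nonneg_left h
            (mul_nonneg (hpow_nonneg p x) (Real.exp_pos _).le)
      _ = ((lam / 24) ^ n / (Nat.factorial n : ℝ)) *
            (x ^ (2 * (p + 2 * n)) * Real.exp (-x ^ 2 / 2)) := by
          rw [mul_pow, ← pow_mul, show 2 * (p + 2 * n) = 2 * p + 4 * n by ring, pow_add]
          ring
  have hbound := norm_integral_le_of_norm_le
    (((hint_g (2 * (p + 2 * n))).const_mul ((lam / 24) ^ n / (Nat.factorial n : ℝ))))
    (Filter.Eventually.of_forall hmaj)
  rw [integral_const_mul] at hbound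
  rw [Real.norm_eq_abs] at hbound
  have hGid : (∫ x : ℝ, x ^ (2 * (p + 2 * n)) * Real.exp (-x ^ 2 / 2)) = G (p + 2 * n) := rfl
  rw [hGid] at hbound
  refine hbound.trans (le_of_eq ?_)
  rw [div_pow]
  ring
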